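/- Let H be a hb-graph on Fin n with hb-edges e_1, …, e_p of m-cardinalities ρ_k satisfying 1 ≤ ρ_k ≤ r, where r ≥ 2 is the m-range of H, and let A_sil be the e-adjacency hypermatrix of its silo-uniformized hb-graph. Then for every s with 1 ≤ s ≤ r−1, the sum of the entries of A_sil over all tuples whose first coordinate is the null vertex N_s equals (r − s) · |{k : ρ_k = s}|; hence the number of hb-edges of each m-cardinality s < r can be retrieved from A_sil as |{k : ρ_k = s}| = (Σ_{t : t(0) = N_s} A_sil(t))/(r − s). -/

import Mathlib

/-- The hb-edges of the silo-uniformized hb-graph: the original multiplicities on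
the original vertices `Sum.inl i`, and multiplicity `r − ρ_k` on the null vertex
`N_s = Sum.inr s` (where `N_s` is labelled `(s : ℕ) + 1 ∈ {1, …, r−1}`) exactly
when the label equals the m-cardinality `ρ_k = Σ_j e_k(j)` of the hb-edge. -/
def siloEdge (n p r : ℕ) (e : Fin p → Fin n → ℕ) (k : Fin p) :
    Fin n ⊕ Fin (r - 1) → ℕ
  | Sum.inl i => e k i
  | Sum.inr s => if (s : ℕ) + 1 = ∑ j, e k j then r - ∑ j, e k j else 0

/-- The e-adjacency hypermatrix of the silo-uniformized hb-graph:
`A_sil(t) = Σ_k (∏_v ê_k(v)!)/(r−1)! · [t realizes ê_k]`. -/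
noncomputable def Asil (n p r : ℕ) (e : Fin p → Fin n → ℕ)
    (t : Fin r → Fin n ⊕ Fin (r - 1)) : ℝ :=
  ∑ k, if ∀ v, (Finset.univ.filter (fun s => t s = v)).card = siloEdge n p r e k v
       then ((∏ v, (siloEdge n p r e k v).factorial : ℕ) : ℝ) / (r - 1).factorial
       else 0

section AuxCounting
open Finset

lemma count_cons {V : Type*} [DecidableEq V] (r : ℕ) (v₀ : V) (u : Fin r → V) (v : V) :
    (univ.filter (fun s : Fin (r + 1) => (Fin.cons v₀ u : Fin (r+1) → V) s = v)).card
      = (if v₀ = v then 1 else 0) + (univ.filter (fun s : Fin r => u s = v)).card := by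
  rw [Finset.card_filter, Finset.card_filter, Fin.sum_univ_succ]
  simp

lemma fiber_empty {V : Type*} [DecidableEq V] [Fintype V] (r : ℕ) (c : V → ℕ) (v₀ : V)
    (h0 : c v₀ = 0) :
    (univ.filter (fun t : Fin (r + 1) → V =>
      (∀ v, (univ.filter (fun s => t s = v)).card = c v) ∧ t 0 = v₀)) = ∅ := by
  rw [Finset.filter_eq_empty_iff]
  rintro t - ⟨hfib, ht0⟩
  have h1 : 0 < (univ.filter (fun s : Fin (r+1) => t s = v₀)).card :=
    Finset.card_pos.mpr ⟨0, by simp [ht0]⟩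
  rw [hfib v₀, h0] at h1
  omega

lemma fiber_eq {V : Type*} [DecidableEq V] [Fintype V] (r : ℕ) (c : V → ℕ) (v₀ : V)
    (hv : 1 ≤ c v₀) :
    (univ.filter (fun t : Fin (r + 1) → V =>
        (∀ v, (univ.filter (fun s => t s = v)).card = c v) ∧ t 0 = v₀)).card
    = (univ.filter (fun u : Fin r → V =>
        ∀ v, (univ.filter (fun s => u s = v)).card = (if v = v₀ then c v₀ - 1 else c v))).card := by
  apply Finset.card_nbij' (fun t => Fin.tail t) (fun u => (Fin.cons v₀ u : Fin (r+1) → V))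
  · rintro t ht
    rw [Finset.mem_coe, Finset.mem_filter] at ht
    obtain ⟨-, hfib, ht0⟩ := ht
    rw [Finset.mem_coe, Finset.mem_filter]
    beta_reduce
    refine ⟨mem_univ _, fun v => ?_⟩
    have hc : t = Fin.cons v₀ (Fin.tail t) := by
      rw [← ht0]; exact (Fin.cons_self_tail t).symm
    have hthis := hfib v
    rw [hc, count_cons] at hthis
    by_cases hvv : v = v₀
    · subst hvv
      rw [if_pos rfl] at hthis
      rw [if_pos rfl]
      omega
    · rw [if_neg (fun hh => hvv hh.symm)] at hthis
      rw [if_neg hvv]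
      omega
  · rintro u hu
    rw [Finset.mem_coe, Finset.mem_filter] at hu
    obtain ⟨-, hfib⟩ := hu
    rw [Finset.mem_coe, Finset.mem_filter]
    refine ⟨mem_univ _, fun v => ?_, by simp⟩
    rw [count_cons, hfib v]
    by_cases hvv : v = v₀
    · subst hvv
      rw [if_pos rfl, if_pos rfl]
      omega
    · rw [if_neg (fun hh => hvv hh.symm), if_neg hvv]
      omega
  · rintro t ht
    rw [Finset.mem_coe, Finset.mem_filter] at ht
    rw [← ht.2.2]
    exact Fin.cons_self_tail t
  · rintro u -
    exact Fin.tail_cons (α := fun _ => V) v₀ u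


lemma aux_sum {V : Type*} [DecidableEq V] [Fintype V] (r : ℕ) (c : V → ℕ) (v₀ : V)
    (hpos : 0 < c v₀) (h : ∑ v, c v = r + 1) :
    ∑ v, (if v = v₀ then c v₀ - 1 else c v) = r := by
  have e1 : (if v₀ = v₀ then c v₀ - 1 else c v₀) + ∑ v ∈ univ.erase v₀,
      (if v = v₀ then c v₀ - 1 else c v) = ∑ v, (if v = v₀ then c v₀ - 1 else c v) :=
    Finset.add_sum_erase univ (fun v => if v = v₀ then c v₀ - 1 else c v) (mem_univ v₀)
  have e2 : c v₀ + ∑ v ∈ univ.erase v₀, c v = ∑ v, c v :=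
    Finset.add_sum_erase univ c (mem_univ v₀)
  have e3 : ∑ v ∈ univ.erase v₀, (if v = v₀ then c v₀ - 1 else c v)
      = ∑ v ∈ univ.erase v₀, c v :=
    Finset.sum_congr rfl fun v hv => by simp [Finset.ne_of_mem_erase hv]
  rw [if_pos rfl] at e1
  omega

lemma aux_prod {V : Type*} [DecidableEq V] [Fintype V] (c : V → ℕ) (v₀ : V)
    (hpos : 0 < c v₀) :
    (∏ v, (c v).factorial) = c v₀ * ∏ v, ((if v = v₀ then c v₀ - 1 else c v)).factorial := by
  rw [← Finset.mul_prod_erase univ (fun v => (c v).factorial) (mem_univ v₀),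
      ← Finset.mul_prod_erase univ
        (fun v => ((if v = v₀ then c v₀ - 1 else c v)).factorial) (mem_univ v₀)]
  have e3 : ∏ v ∈ univ.erase v₀, ((if v = v₀ then c v₀ - 1 else c v)).factorial
      = ∏ v ∈ univ.erase v₀, (c v).factorial :=
    Finset.prod_congr rfl fun v hv => by simp [Finset.ne_of_mem_erase hv]
  rw [e3, ← mul_assoc]
  congr 1
  rw [if_pos rfl]
  exact (Nat.mul_factorial_pred hpos.ne').symm

lemma multinomial_count {V : Type*} [DecidableEq V] [Fintype V] :
    ∀ (r : ℕ) (c : V → ℕ), ∑ v, c v = r →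
      (∏ v, (c v).factorial) *
        (univ.filter (fun t : Fin r → V =>
          ∀ v, (univ.filter (fun s => t s = v)).card = c v)).card = r.factorial := by
  intro r
  induction r with
  | zero =>
    intro c h
    have hc : ∀ v, c v = 0 := fun v =>
      (Finset.sum_eq_zero_iff).mp h v (mem_univ v)
    have h1 : (univ.filter (fun t : Fin 0 → V =>
        ∀ v, (univ.filter (fun s => t s = v)).card = c v)) = univ := by
      rw [Finset.filter_eq_self]
      intro t _ v
      simp [hc v]
    rw [h1]
    simp [hc]
  | succ r ih =>
    intro c h
    have split : (univ.filter (fun t : Fin (r+1) → V =>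
          ∀ v, (univ.filter (fun s => t s = v)).card = c v)).card
        = ∑ v₀ : V, (univ.filter (fun t : Fin (r+1) → V =>
            (∀ v, (univ.filter (fun s => t s = v)).card = c v) ∧ t 0 = v₀)).card := by
      rw [Finset.card_eq_sum_card_fiberwise (f := fun t => t 0) (t := univ)
        (fun _ _ => mem_univ _)]
      exact Finset.sum_congr rfl fun v₀ _ => by rw [Finset.filter_filter]
    rw [split, Finset.mul_sum]
    have hterm : ∀ v₀ : V, (∏ v, (c v).factorial) *
        (univ.filter (fun t : Fin (r+1) → V =>
          (∀ v, (univ.filter (fun s => t s = v)).card = c v) ∧ t 0 = v₀)).card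
        = c v₀ * r.factorial := by
      intro v₀
      rcases Nat.eq_zero_or_pos (c v₀) with h0 | hpos
      · rw [fiber_empty r c v₀ h0, h0]; simp
      · rw [fiber_eq r c v₀ hpos, aux_prod c v₀ hpos, mul_assoc,
            ih _ (aux_sum r c v₀ hpos h)]
    simp only [hterm]
    rw [← Finset.sum_mul, h, Nat.factorial_succ]

lemma fixed_count {V : Type*} [DecidableEq V] [Fintype V] (r : ℕ) (hr : 0 < r) (c : V → ℕ)
    (h : ∑ v, c v = r) (v₀ : V) :
    (∏ v, (c v).factorial) *
      (univ.filter (fun t : Fin r → V =>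
        (∀ v, (univ.filter (fun s => t s = v)).card = c v) ∧ t ⟨0, hr⟩ = v₀)).card
    = c v₀ * (r - 1).factorial := by
  obtain ⟨r', rfl⟩ : ∃ r', r = r' + 1 := ⟨r - 1, by omega⟩
  have hz : (⟨0, hr⟩ : Fin (r' + 1)) = 0 := rfl
  simp only [hz, Nat.add_sub_cancel]
  rcases Nat.eq_zero_or_pos (c v₀) with h0 | hpos
  · rw [fiber_empty r' c v₀ h0, h0]; simp
  · rw [fiber_eq r' c v₀ hpos, aux_prod c v₀ hpos, mul_assoc,
        multinomial_count r' _ (aux_sum r' c v₀ hpos h)]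

lemma silo_sum (n p r : ℕ) (e : Fin p → Fin n → ℕ) (k : Fin p)
    (hlo : 1 ≤ ∑ j, e k j) (hub : ∑ j, e k j ≤ r) :
    ∑ v, siloEdge n p r e k v = r := by
  rw [Fintype.sum_sum_type]
  have h1 : ∀ i : Fin n, siloEdge n p r e k (Sum.inl i) = e k i := fun _ => rfl
  have h2 : ∀ s : Fin (r-1), siloEdge n p r e k (Sum.inr s)
      = if (s : ℕ) + 1 = ∑ j, e k j then r - ∑ j, e k j else 0 := fun _ => rfl
  simp only [h1, h2]
  rcases eq_or_lt_of_le hub with hEq | hlt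
  · have : ∀ s : Fin (r-1), (if (s : ℕ) + 1 = ∑ j, e k j then r - ∑ j, e k j else 0) = 0 := by
      intro s
      split_ifs with hh
      · omega
      · rfl
    simp only [this, Finset.sum_const_zero, add_zero]
    exact hEq
  · have hρ : (∑ j, e k j) - 1 < r - 1 := by omega
    rw [Finset.sum_eq_single (⟨(∑ j, e k j) - 1, hρ⟩ : Fin (r-1))]
    · rw [if_pos (by simp; omega)]
      omega
    · intro b _ hb
      rw [if_neg]
      intro hc
      exact hb (Fin.ext (by simp; omega))
    · intro h; exact absurd (Finset.mem_univ _) h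

end AuxCounting

/-- For a hb-graph on `Fin n` with hb-edges of m-cardinalities `ρ_k` satisfying
`1 ≤ ρ_k ≤ r`, where `r ≥ 2` is the m-range: for every null vertex `N_s`
(labelled `s = (s' : ℕ) + 1` with `1 ≤ s ≤ r−1`), the sum of the entries of the
silo e-adjacency hypermatrix over all tuples whose first coordinate is `N_s`
equals `(r − s) · |{k : ρ_k = s}|`; hence `|{k : ρ_k = s}|` is retrieved by
dividing this sum by `r − s`. -/
theorem stmt9 (n p r : ℕ) (hr : 2 ≤ r) (e : Fin p → Fin n → ℕ)
    (hlo : ∀ k, 1 ≤ ∑ j, e k j) (hub : ∀ k, ∑ j, e k j ≤ r)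
    (hrange : Finset.univ.sup (fun k : Fin p => ∑ j, e k j) = r) :
    ∀ s : Fin (r - 1),
      (∑ t ∈ Finset.univ.filter
          (fun t : Fin r → Fin n ⊕ Fin (r - 1) => t ⟨0, by omega⟩ = Sum.inr s),
        Asil n p r e t)
        = (((r - ((s : ℕ) + 1)) *
            (Finset.univ.filter (fun k : Fin p => ∑ j, e k j = (s : ℕ) + 1)).card : ℕ) : ℝ) ∧
      ((Finset.univ.filter (fun k : Fin p => ∑ j, e k j = (s : ℕ) + 1)).card : ℝ)
        = (∑ t ∈ Finset.univ.filter
              (fun t : Fin r → Fin n ⊕ Fin (r - 1) => t ⟨0, by omega⟩ = Sum.inr s),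
            Asil n p r e t) / ((r - ((s : ℕ) + 1) : ℕ) : ℝ) := by
  intro s
  have h0 : 0 < r := by omega
  have hs : (s : ℕ) < r - 1 := s.isLt
  have hfac : (((r - 1).factorial : ℕ) : ℝ) ≠ 0 :=
    Nat.cast_ne_zero.mpr (Nat.factorial_ne_zero _)
  have key : (∑ t ∈ Finset.univ.filter
        (fun t : Fin r → Fin n ⊕ Fin (r - 1) => t ⟨0, h0⟩ = Sum.inr s),
      Asil n p r e t)
      = (((r - ((s : ℕ) + 1)) *
          (Finset.univ.filter (fun k : Fin p => ∑ j, e k j = (s : ℕ) + 1)).card : ℕ) : ℝ) := by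
    unfold Asil
    rw [Finset.sum_comm]
    have hk : ∀ k : Fin p,
        (∑ t ∈ Finset.univ.filter
            (fun t : Fin r → Fin n ⊕ Fin (r - 1) => t ⟨0, h0⟩ = Sum.inr s),
          if ∀ v, (Finset.univ.filter (fun s' => t s' = v)).card = siloEdge n p r e k v
          then ((∏ v, (siloEdge n p r e k v).factorial : ℕ) : ℝ) / (r - 1).factorial
          else 0)
        = (siloEdge n p r e k (Sum.inr s) : ℝ) := by
      intro k
      rw [Finset.sum_filter]
      have hcomb : ∀ t : Fin r → Fin n ⊕ Fin (r - 1),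
          (if t ⟨0, h0⟩ = Sum.inr s then
            (if ∀ v, (Finset.univ.filter (fun s' => t s' = v)).card = siloEdge n p r e k v
             then ((∏ v, (siloEdge n p r e k v).factorial : ℕ) : ℝ) / (r - 1).factorial
             else 0) else 0)
          = (if (∀ v, (Finset.univ.filter (fun s' => t s' = v)).card = siloEdge n p r e k v)
                ∧ t ⟨0, h0⟩ = Sum.inr s
             then ((∏ v, (siloEdge n p r e k v).factorial : ℕ) : ℝ) / (r - 1).factorial
             else 0) := by
        intro t
        split_ifs <;> tauto
      simp only [hcomb]
      rw [← Finset.sum_filter, Finset.sum_const, nsmul_eq_mul]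
      have hcount := fixed_count r h0 (siloEdge n p r e k)
        (silo_sum n p r e k (hlo k) (hub k)) (Sum.inr s)
      have hcast : ((∏ v, (siloEdge n p r e k v).factorial : ℕ) : ℝ) *
          ((Finset.univ.filter (fun t : Fin r → Fin n ⊕ Fin (r - 1) =>
            (∀ v, (Finset.univ.filter (fun s' => t s' = v)).card = siloEdge n p r e k v)
            ∧ t ⟨0, h0⟩ = Sum.inr s)).card : ℝ)
          = (siloEdge n p r e k (Sum.inr s) : ℝ) * (((r - 1).factorial : ℕ) : ℝ) := by
        exact_mod_cast congrArg (Nat.cast : ℕ → ℝ) hcount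
      rw [← mul_div_assoc, div_eq_iff hfac, mul_comm]
      exact hcast
    simp only [hk]
    have hnat : (∑ k, siloEdge n p r e k (Sum.inr s))
        = (r - ((s : ℕ) + 1)) *
          (Finset.univ.filter (fun k : Fin p => ∑ j, e k j = (s : ℕ) + 1)).card := by
      have he : ∀ k : Fin p, siloEdge n p r e k (Sum.inr s)
          = if (∑ j, e k j) = (s : ℕ) + 1 then r - ((s : ℕ) + 1) else 0 := by
        intro k
        show (if (s : ℕ) + 1 = ∑ j, e k j then r - ∑ j, e k j else 0) = _
        by_cases hk2 : (∑ j, e k j) = (s : ℕ) + 1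
        · rw [if_pos hk2.symm, if_pos hk2, hk2]
        · rw [if_neg (fun hh => hk2 hh.symm), if_neg hk2]
      simp only [he]
      rw [← Finset.sum_filter, Finset.sum_const, smul_eq_mul, mul_comm]
    rw [← Nat.cast_sum, hnat]
  have hne : ((r - ((s : ℕ) + 1) : ℕ) : ℝ) ≠ 0 :=
    Nat.cast_ne_zero.mpr (by omega)
  have key2 : ((Finset.univ.filter (fun k : Fin p => ∑ j, e k j = (s : ℕ) + 1)).card : ℝ)
      = (∑ t ∈ Finset.univ.filter
            (fun t : Fin r → Fin n ⊕ Fin (r - 1) => t ⟨0, h0⟩ = Sum.inr s),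
          Asil n p r e t) / ((r - ((s : ℕ) + 1) : ℕ) : ℝ) := by
    rw [key, Nat.cast_mul, mul_comm, mul_div_assoc, div_self hne, mul_one]
  exact ⟨key, key2⟩
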